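/- Let H be a non-negative self-adjoint operator on a Hilbert space ℋ. If there exists a sequence ψ_n in the form domain D(H^{1/2}) with ‖ψ_n‖ = 1 for all n and ‖(H+1)^{-1/2}(H−λ)ψ_n‖ → 0 as n → ∞, then λ ∈ σ(H). -/
import Mathlib


open Filter

/-- Let `H` be a non-negative self-adjoint operator on a Hilbert space `ℋ`.
If there exists a sequence `ψ n` (in the form domain) with `‖ψ n‖ = 1` for all `n` and
`‖(H+1)^{-1/2}(H-λ)ψ n‖ → 0` as `n → ∞` (convergence in the dual norm `‖·‖₋₁`),
then `λ ∈ σ(H)`. -/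
theorem stmt1 {ℋ : Type*} [NormedAddCommGroup ℋ] [InnerProductSpace ℂ ℋ] [CompleteSpace ℋ]
    (H : ℋ →L[ℂ] ℋ) (hH : H.IsPositive) (lam : ℝ) (ψ : ℕ → ℋ)
    (hnorm : ∀ n, ‖ψ n‖ = 1)
    (hconv : Tendsto
      (fun n => ‖cfc (fun t : ℝ => Real.sqrt ((t + 1)⁻¹)) H (H (ψ n) - (lam : ℂ) • ψ n)‖)
      atTop (nhds 0)) :
    lam ∈ spectrum ℝ H := by
  by_contra hlam
  have hsa : IsSelfAdjoint H := hH.isSelfAdjoint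
  have hspec : ∀ t ∈ spectrum ℝ H, 0 ≤ t :=
    spectrum_nonneg_of_nonneg ((ContinuousLinearMap.nonneg_iff_isPositive H).mpr hH)
  have hpos : ∀ t ∈ spectrum ℝ H, (0:ℝ) < t + 1 := fun t ht => by
    have := hspec t ht; linarith
  have hf : ContinuousOn (fun t : ℝ => Real.sqrt ((t + 1)⁻¹)) (spectrum ℝ H) := by
    intro t ht
    exact (Real.continuous_sqrt.continuousAt.comp
      (((continuous_id.add continuous_const).continuousAt).inv₀ (hpos t ht).ne')).continuousWithinAt
  have hg : ContinuousOn (fun t : ℝ => Real.sqrt (t + 1)) (spectrum ℝ H) :=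
    (Real.continuous_sqrt.comp (continuous_id.add continuous_const)).continuousOn
  set A := cfc (fun t : ℝ => Real.sqrt ((t + 1)⁻¹)) H with hA
  set B := cfc (fun t : ℝ => Real.sqrt (t + 1)) H with hB
  have hBA : B * A = 1 := by
    rw [hA, hB, ← cfc_mul _ _ H hg hf]
    rw [cfc_congr (g := fun _ : ℝ => (1:ℝ)) (fun t ht => ?_), cfc_const_one ℝ H]
    have h1 : (0:ℝ) < t + 1 := hpos t ht
    rw [Real.sqrt_inv, mul_inv_cancel₀ (Real.sqrt_ne_zero'.mpr h1)]
  obtain ⟨u, hu⟩ := (spectrum.notMem_iff.mp hlam)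
  set R : ℋ →L[ℂ] ℋ := ↑u⁻¹
  set v : ℕ → ℋ := fun n => H (ψ n) - (lam : ℂ) • ψ n with hv
  have key : ∀ n, ψ n = -((R * B) (A (v n))) := by
    intro n
    have h1 : (↑u : ℋ →L[ℂ] ℋ) (ψ n) = -(v n) := by
      rw [hu]
      simp [hv, Algebra.algebraMap_eq_smul_one, sub_eq_add_neg, ContinuousLinearMap.sub_apply,
        ContinuousLinearMap.smul_apply, ContinuousLinearMap.one_apply]
    have h2 : R ((↑u : ℋ →L[ℂ] ℋ) (ψ n)) = ψ n := by
      have : R * ↑u = 1 := by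
        simp [R, ← Units.val_mul]
      calc R ((↑u : ℋ →L[ℂ] ℋ) (ψ n)) = (R * ↑u) (ψ n) := rfl
        _ = ψ n := by rw [this]; rfl
    have h3 : v n = B (A (v n)) := by
      have : (B * A) (v n) = (1 : ℋ →L[ℂ] ℋ) (v n) := by rw [hBA]
      simpa [ContinuousLinearMap.mul_apply] using this.symm
    calc ψ n = R ((↑u : ℋ →L[ℂ] ℋ) (ψ n)) := h2.symm
      _ = R (-(v n)) := by rw [h1]
      _ = -(R (v n)) := map_neg R _
      _ = -((R * B) (A (v n))) := by
          rw [show (R * B) (A (v n)) = R (B (A (v n))) from rfl, ← h3]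
  have hle : ∀ n, ‖ψ n‖ ≤ ‖R * B‖ * ‖A (v n)‖ := fun n => by
    rw [key n, norm_neg]
    exact (R * B).le_opNorm _
  have htend : Tendsto (fun n => ‖ψ n‖) atTop (nhds 0) := by
    apply squeeze_zero (fun n => norm_nonneg _) hle
    have := hconv.const_mul ‖R * B‖
    rw [mul_zero] at this
    exact this
  simp only [hnorm] at htend
  exact zero_ne_one (tendsto_nhds_unique htend tendsto_const_nhds)
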